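/- Let H be a real Hilbert space, S : H → H linear bounded symmetric compact, and β : H → H positively homogeneous with (β(u), u) ≥ 0 for all u, and weak-to-strong sequentially continuous. Suppose there exists φ ∈ H with (Sφ, φ) − (β(φ), φ) > 0. Then the maximum M := max_{‖u‖ = 1} [(Su, u) − (β(u), u)] exists, is positive, and equals sup_{u ≠ 0} [(Su, u) − (β(u), u)]/‖u‖². -/

import Mathlib

open Filter Topology
open scoped RealInnerProductSpace

set_option linter.unnecessarySimpa false

/-- Weak sequential compactness of the closed unit ball in a real Hilbert space. -/
theorem weak_seq_compact {H : Type*} [NormedAddCommGroup H] [InnerProductSpace ℝ H]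
    [CompleteSpace H] (u : ℕ → H) (hb : ∀ n, ‖u n‖ ≤ 1) :
    ∃ l : H, ‖l‖ ≤ 1 ∧ ∃ φ : ℕ → ℕ, StrictMono φ ∧
      ∀ v : H, Tendsto (fun n => ⟪u (φ n), v⟫) atTop (𝓝 ⟪l, v⟫) := by
  classical
  -- diagonal extraction via compactness of [-1,1]^ℕ
  set g : ℕ → ℕ → ℝ := fun n k => ⟪u n, u k⟫ with hg
  have hgmem : ∀ n, g n ∈ Set.univ.pi (fun _ : ℕ => Set.Icc (-1 : ℝ) 1) := by
    intro n k _
    have := abs_real_inner_le_norm (u n) (u k)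
    have h1 : |⟪u n, u k⟫| ≤ 1 := this.trans (by
      calc ‖u n‖ * ‖u k‖ ≤ 1 * 1 := by
            exact mul_le_mul (hb n) (hb k) (norm_nonneg _) zero_le_one
        _ = 1 := by ring)
    constructor
    · linarith [neg_abs_le (⟪u n, u k⟫), abs_nonneg (⟪u n, u k⟫)]
    · linarith [le_abs_self (⟪u n, u k⟫)]
  have hcomp : IsCompact (Set.univ.pi (fun _ : ℕ => Set.Icc (-1 : ℝ) 1)) :=
    isCompact_univ_pi fun _ => isCompact_Icc
  obtain ⟨a, _, φ, hφ, hconv⟩ := hcomp.tendsto_subseq hgmem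
  have hpt : ∀ k, Tendsto (fun n => ⟪u (φ n), u k⟫) atTop (𝓝 (a k)) := by
    intro k
    have := (tendsto_pi_nhds.1 hconv) k
    exact this
  -- convergence on the span
  have hspan : ∀ v ∈ Submodule.span ℝ (Set.range u),
      ∃ c : ℝ, Tendsto (fun n => ⟪u (φ n), v⟫) atTop (𝓝 c) := by
    intro v hv
    induction hv using Submodule.span_induction with
    | mem x hx =>
      obtain ⟨k, rfl⟩ := hx
      exact ⟨a k, hpt k⟩
    | zero => exact ⟨0, by simpa using tendsto_const_nhds⟩
    | add x y _ _ hx hy =>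
      obtain ⟨c, hc⟩ := hx; obtain ⟨d, hd⟩ := hy
      exact ⟨c + d, by simpa [inner_add_right] using hc.add hd⟩
    | smul t x _ hx =>
      obtain ⟨c, hc⟩ := hx
      exact ⟨t * c, by simpa [real_inner_smul_right] using hc.const_mul t⟩
  -- convergence on the closure of the span
  set K := (Submodule.span ℝ (Set.range u)).topologicalClosure with hK
  have hclos : ∀ v ∈ K, ∃ c : ℝ, Tendsto (fun n => ⟪u (φ n), v⟫) atTop (𝓝 c) := by
    intro v hv
    have hcauchy : CauchySeq (fun n => ⟪u (φ n), v⟫) := by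
      rw [Metric.cauchySeq_iff]
      intro ε hε
      have hv' : v ∈ closure (Submodule.span ℝ (Set.range u) : Set H) := hv
      obtain ⟨w, hw, hwv⟩ := Metric.mem_closure_iff.1 hv' (ε / 3) (by linarith)
      obtain ⟨c, hc⟩ := hspan w hw
      have hc' : CauchySeq (fun n => ⟪u (φ n), w⟫) := hc.cauchySeq
      rw [Metric.cauchySeq_iff] at hc'
      obtain ⟨N, hN⟩ := hc' (ε / 3) (by linarith)
      refine ⟨N, fun m hm n hn => ?_⟩
      have key : ∀ j, |⟪u (φ j), v⟫ - ⟪u (φ j), w⟫| ≤ ε / 3 := by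
        intro j
        rw [← inner_sub_right]
        refine (abs_real_inner_le_norm _ _).trans ?_
        calc ‖u (φ j)‖ * ‖v - w‖ ≤ 1 * (ε / 3) := by
              refine mul_le_mul (hb _) ?_ (norm_nonneg _) zero_le_one
              rw [← dist_eq_norm]; exact le_of_lt hwv
          _ = ε / 3 := by ring
      have h2 := hN m hm n hn
      rw [Real.dist_eq] at h2 ⊢
      have := key m; have := key n
      calc |⟪u (φ m), v⟫ - ⟪u (φ n), v⟫|
          ≤ |⟪u (φ m), v⟫ - ⟪u (φ m), w⟫| + |⟪u (φ m), w⟫ - ⟪u (φ n), w⟫|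
            + |⟪u (φ n), w⟫ - ⟪u (φ n), v⟫| := by
            have := abs_sub_le (⟪u (φ m), v⟫) (⟪u (φ m), w⟫) (⟪u (φ n), v⟫)
            have h3 := abs_sub_le (⟪u (φ m), w⟫) (⟪u (φ n), w⟫) (⟪u (φ n), v⟫)
            linarith
        _ < ε := by
            have h4 := key m
            have h5 : |⟪u (φ n), w⟫ - ⟪u (φ n), v⟫| ≤ ε / 3 := by
              rw [abs_sub_comm]; exact key n
            linarith
    exact cauchySeq_tendsto_of_complete hcauchy
  -- reduce general v to projection onto K
  haveI : CompleteSpace K :=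
    (Submodule.isClosed_topologicalClosure _).completeSpace_coe
  have huK : ∀ n, u n ∈ K :=
    fun n => Submodule.le_topologicalClosure _ (Submodule.subset_span ⟨n, rfl⟩)
  have hall : ∀ v : H, ∃ c : ℝ, Tendsto (fun n => ⟪u (φ n), v⟫) atTop (𝓝 c) := by
    intro v
    obtain ⟨c, hc⟩ := hclos (K.orthogonalProjectionOnto v) (K.orthogonalProjectionOnto v).2
    refine ⟨c, ?_⟩
    have heq : ∀ n, ⟪u (φ n), v⟫ = ⟪u (φ n), (K.orthogonalProjectionOnto v : H)⟫ := by
      intro n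
      have hmem : v - K.orthogonalProjectionOnto v ∈ Kᗮ :=
        K.sub_starProjection_mem_orthogonal v
      have h2 : ⟪u (φ n), v⟫ - ⟪u (φ n), (K.orthogonalProjectionOnto v : H)⟫ = 0 := by
        rw [← inner_sub_right]; exact hmem (u (φ n)) (huK (φ n))
      linarith
    simpa [heq] using hc
  -- build the weak limit via Riesz representation
  choose f hf using hall
  have hfadd : ∀ v w : H, f (v + w) = f v + f w := by
    intro v w
    have h1 := (hf v).add (hf w)
    have h2 : Tendsto (fun n => ⟪u (φ n), v + w⟫) atTop (𝓝 (f v + f w)) := by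
      simpa [inner_add_right] using h1
    exact tendsto_nhds_unique (hf (v + w)) h2
  have hfsmul : ∀ (t : ℝ) (v : H), f (t • v) = t * f v := by
    intro t v
    have h2 : Tendsto (fun n => ⟪u (φ n), t • v⟫) atTop (𝓝 (t * f v)) := by
      simpa [real_inner_smul_right] using (hf v).const_mul t
    exact tendsto_nhds_unique (hf (t • v)) h2
  have hfbd : ∀ v : H, |f v| ≤ ‖v‖ := by
    intro v
    have : Tendsto (fun n => |⟪u (φ n), v⟫|) atTop (𝓝 |f v|) := (hf v).abs
    refine le_of_tendsto this (Eventually.of_forall fun n => ?_)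
    refine (abs_real_inner_le_norm _ _).trans ?_
    calc ‖u (φ n)‖ * ‖v‖ ≤ 1 * ‖v‖ :=
          mul_le_mul_of_nonneg_right (hb _) (norm_nonneg _)
      _ = ‖v‖ := one_mul _
  let L : H →ₗ[ℝ] ℝ :=
    { toFun := f, map_add' := hfadd, map_smul' := hfsmul }
  let Lc : H →L[ℝ] ℝ := LinearMap.mkContinuous L 1 (by
    intro v; show ‖f v‖ ≤ 1 * ‖v‖; simpa using (hfbd v))
  let l : H := (InnerProductSpace.toDual ℝ H).symm Lc
  have hl : ∀ v : H, ⟪l, v⟫ = f v := by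
    intro v
    exact InnerProductSpace.toDual_symm_apply (𝕜 := ℝ) (E := H) (x := v) (y := Lc)
  refine ⟨l, ?_, φ, hφ, fun v => by rw [hl v]; exact hf v⟩
  -- ‖l‖ ≤ 1
  by_cases h0 : l = 0
  · simp [h0]
  have h1 : ⟪l, l⟫ ≤ ‖l‖ := by
    rw [hl l]
    calc f l ≤ |f l| := le_abs_self _
      _ ≤ ‖l‖ := hfbd l
  have h2 : ‖l‖ * ‖l‖ ≤ ‖l‖ := by rwa [real_inner_self_eq_norm_mul_norm] at h1
  have h3 : 0 < ‖l‖ := norm_pos_iff.2 h0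
  nlinarith


/-- Inner product of a strongly convergent and a weakly convergent bounded sequence. -/
theorem inner_tendsto_weak {H : Type*} [NormedAddCommGroup H] [InnerProductSpace ℝ H]
    (a : ℕ → H) (A : H) (u : ℕ → H) (l : H) (hb : ∀ n, ‖u n‖ ≤ 1)
    (ha : Tendsto a atTop (𝓝 A))
    (hu : ∀ v : H, Tendsto (fun n => ⟪u n, v⟫) atTop (𝓝 ⟪l, v⟫)) :
    Tendsto (fun n => ⟪a n, u n⟫) atTop (𝓝 ⟪A, l⟫) := by
  have h1 : Tendsto (fun n => ⟪a n, u n⟫ - ⟪A, u n⟫) atTop (𝓝 0) := by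
    apply squeeze_zero_norm (a := fun n => ‖a n - A‖)
    · intro n
      rw [← inner_sub_left]
      refine (abs_real_inner_le_norm _ _).trans ?_
      calc ‖a n - A‖ * ‖u n‖ ≤ ‖a n - A‖ * 1 :=
            mul_le_mul_of_nonneg_left (hb n) (norm_nonneg _)
        _ = ‖a n - A‖ := mul_one _
    · exact tendsto_iff_norm_sub_tendsto_zero.1 ha
  have h2 : Tendsto (fun n => ⟪A, u n⟫) atTop (𝓝 ⟪A, l⟫) := by
    have := hu A
    simpa [real_inner_comm] using this
  have := h1.add h2
  simpa using this

/-- A compact operator maps weakly convergent bounded sequences to strongly convergent ones. -/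
theorem compact_weak_to_strong {H : Type*} [NormedAddCommGroup H] [InnerProductSpace ℝ H]
    [CompleteSpace H] (S : H →L[ℝ] H) (hsym : ∀ u v : H, ⟪S u, v⟫ = ⟪u, S v⟫)
    (hcpt : IsCompactOperator S) (u : ℕ → H) (l : H) (hb : ∀ n, ‖u n‖ ≤ 1)
    (hu : ∀ v : H, Tendsto (fun n => ⟪u n, v⟫) atTop (𝓝 ⟪l, v⟫)) :
    Tendsto (fun n => S (u n)) atTop (𝓝 (S l)) := by
  obtain ⟨K, hKc, hKnhds⟩ := hcpt
  obtain ⟨r, hr, hball⟩ := Metric.mem_nhds_iff.1 hKnhds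
  set c : ℝ := r / 2 with hc
  have hcpos : 0 < c := by positivity
  have hmem : ∀ n, S (c • u n) ∈ K := by
    intro n
    apply hball
    rw [Metric.mem_ball, dist_zero_right, norm_smul]
    calc ‖c‖ * ‖u n‖ ≤ ‖c‖ * 1 := mul_le_mul_of_nonneg_left (hb n) (norm_nonneg _)
      _ = c := by rw [mul_one, Real.norm_eq_abs, abs_of_pos hcpos]
      _ < r := by rw [hc]; linarith
  set y : ℕ → H := fun n => S (c • u n) with hy
  have hyval : ∀ (k : ℕ) (v : H), ⟪y k, v⟫ = c * ⟪u k, S v⟫ := by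
    intro k v
    rw [hy]
    simp only [hsym (c • u k) v, real_inner_smul_left]
  have hkey : Tendsto y atTop (𝓝 (S (c • l))) := by
    apply tendsto_of_subseq_tendsto
    intro ns hns
    obtain ⟨w, _, ms, hms, hw⟩ := hKc.tendsto_subseq (fun m => hmem (ns m))
    refine ⟨ms, ?_⟩
    have hweq : w = S (c • l) := by
      apply ext_inner_right ℝ
      intro v
      have h1 : Tendsto (fun m => ⟪y (ns (ms m)), v⟫) atTop (𝓝 ⟪w, v⟫) :=
        hw.inner tendsto_const_nhds
      have h2 : Tendsto (fun m => ⟪y (ns (ms m)), v⟫) atTop (𝓝 ⟪S (c • l), v⟫) := by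
        have hsub : Tendsto (fun m => ns (ms m)) atTop atTop :=
          hns.comp hms.tendsto_atTop
        have h3 : Tendsto (fun m => ⟪u (ns (ms m)), S v⟫) atTop (𝓝 ⟪l, S v⟫) :=
          (hu (S v)).comp hsub
        have h4 : Tendsto (fun m => c * ⟪u (ns (ms m)), S v⟫) atTop (𝓝 (c * ⟪l, S v⟫)) :=
          h3.const_mul c
        have h5 : ⟪S (c • l), v⟫ = c * ⟪l, S v⟫ := by
          rw [hsym (c • l) v, real_inner_smul_left]
        rw [h5]
        exact h4.congr fun m => (hyval (ns (ms m)) v).symm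
      exact tendsto_nhds_unique h1 h2
    rw [← hweq]
    exact hw
  have hfin : Tendsto (fun n => c⁻¹ • y n) atTop (𝓝 (c⁻¹ • S (c • l))) :=
    hkey.const_smul c⁻¹
  have he1 : ∀ n, c⁻¹ • y n = S (u n) := by
    intro n
    rw [hy]
    simp only [map_smul, smul_smul, inv_mul_cancel₀ (ne_of_gt hcpos), one_smul]
  have he2 : c⁻¹ • S (c • l) = S l := by
    simp only [map_smul, smul_smul, inv_mul_cancel₀ (ne_of_gt hcpos), one_smul]
  rw [he2] at hfin
  exact hfin.congr he1

/-- If `S` is linear bounded symmetric compact, `β` positively homogeneous with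
`(β u, u) ≥ 0` and weak-to-strong sequentially continuous, and
`(S φ, φ) − (β φ, φ) > 0` for some `φ`, then `M = max_{‖u‖=1} [(S u, u) − (β u, u)]`
exists, is positive, and dominates the quotient `[(S u, u) − (β u, u)]/‖u‖²` for all
`u ≠ 0`. -/
theorem stmt_13 {H : Type*} [NormedAddCommGroup H] [InnerProductSpace ℝ H] [CompleteSpace H]
    (S : H →L[ℝ] H)
    (hsym : ∀ u v : H, ⟪S u, v⟫ = ⟪u, S v⟫)
    (hcpt : IsCompactOperator S)
    (β : H → H)
    (hhom : ∀ (t : ℝ), 0 < t → ∀ u : H, β (t • u) = t • β u)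
    (hβnn : ∀ u : H, 0 ≤ ⟪β u, u⟫)
    (hws : ∀ (w : ℕ → H) (l : H),
      (∀ v : H, Tendsto (fun n => ⟪w n, v⟫) atTop (𝓝 ⟪l, v⟫)) →
      Tendsto (fun n => β (w n)) atTop (𝓝 (β l)))
    (hφ : ∃ φ : H, 0 < ⟪S φ, φ⟫ - ⟪β φ, φ⟫) :
    ∃ u₀ : H, ‖u₀‖ = 1 ∧ 0 < ⟪S u₀, u₀⟫ - ⟪β u₀, u₀⟫ ∧
      (∀ u : H, ‖u‖ = 1 → ⟪S u, u⟫ - ⟪β u, u⟫ ≤ ⟪S u₀, u₀⟫ - ⟪β u₀, u₀⟫) ∧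
      (∀ u : H, u ≠ 0 →
        (⟪S u, u⟫ - ⟪β u, u⟫) / ‖u‖ ^ 2 ≤ ⟪S u₀, u₀⟫ - ⟪β u₀, u₀⟫) := by
  classical
  set F : H → ℝ := fun u => ⟪S u, u⟫ - ⟪β u, u⟫ with hF
  obtain ⟨φ₀, hφ₀⟩ := hφ
  have hF0 : F 0 = 0 := by simp [hF]
  have hφ₀ne : φ₀ ≠ 0 := by
    intro h; rw [h] at hφ₀
    simp only [hF] at hF0
    simp only [map_zero, inner_zero_right] at hφ₀
    linarith
  -- homogeneity of F
  have hFhom : ∀ (t : ℝ), 0 < t → ∀ u : H, F (t • u) = t ^ 2 * F u := by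
    intro t ht u
    have h1 : ⟪S (t • u), t • u⟫ = t ^ 2 * ⟪S u, u⟫ := by
      rw [map_smul, real_inner_smul_left, real_inner_smul_right]; ring
    have h2 : ⟪β (t • u), t • u⟫ = t ^ 2 * ⟪β u, u⟫ := by
      rw [hhom t ht u, real_inner_smul_left, real_inner_smul_right]; ring
    simp only [hF, h1, h2]; ring
  set A : Set ℝ := F '' {u : H | ‖u‖ = 1} with hA
  -- A is nonempty and bounded above
  have hψnorm : ‖(‖φ₀‖⁻¹ • φ₀ : H)‖ = 1 := norm_smul_inv_norm hφ₀ne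
  have hφ₀pos : 0 < ‖φ₀‖ := norm_pos_iff.2 hφ₀ne
  have hψpos : 0 < F (‖φ₀‖⁻¹ • φ₀) := by
    rw [hFhom _ (inv_pos.2 hφ₀pos) φ₀]
    exact mul_pos (pow_pos (inv_pos.2 hφ₀pos) 2) hφ₀
  have hAne : A.Nonempty := ⟨F (‖φ₀‖⁻¹ • φ₀), ⟨_, hψnorm, rfl⟩⟩
  have hAbdd : BddAbove A := by
    refine ⟨‖S‖, fun x hx => ?_⟩
    obtain ⟨u, hu, rfl⟩ := hx
    have h1 : ⟪S u, u⟫ ≤ ‖S‖ := by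
      calc ⟪S u, u⟫ ≤ ‖S u‖ * ‖u‖ := real_inner_le_norm _ _
        _ ≤ ‖S‖ * ‖u‖ * ‖u‖ := mul_le_mul_of_nonneg_right (S.le_opNorm u) (norm_nonneg _)
        _ = ‖S‖ := by rw [hu]; ring
    have := hβnn u
    simp only [hF, Set.mem_setOf_eq] at *
    linarith
  set M : ℝ := sSup A with hM
  have hmemle : ∀ u : H, ‖u‖ = 1 → F u ≤ M := fun u hu => le_csSup hAbdd ⟨u, hu, rfl⟩
  have hMpos : 0 < M := lt_of_lt_of_le hψpos (hmemle _ hψnorm)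
  -- maximizing sequence
  have hseq : ∀ n : ℕ, ∃ u : H, ‖u‖ = 1 ∧ M - 1 / (n + 1) < F u := by
    intro n
    have h1 : M - 1 / ((n:ℝ) + 1) < M := by
      have : (0:ℝ) < 1 / ((n:ℝ) + 1) := by positivity
      linarith
    obtain ⟨x, hxA, hx⟩ := exists_lt_of_lt_csSup hAne h1
    obtain ⟨u, hu, rfl⟩ := hxA
    exact ⟨u, hu, hx⟩
  choose u hunorm hulow using hseq
  have hub : ∀ n, ‖u n‖ ≤ 1 := fun n => le_of_eq (hunorm n)
  have hFlimM : Tendsto (fun n => F (u n)) atTop (𝓝 M) := by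
    refine tendsto_of_tendsto_of_tendsto_of_le_of_le
      (g := fun n : ℕ => M - 1 / ((n:ℝ) + 1)) (h := fun _ : ℕ => M) ?_ tendsto_const_nhds
      (fun n => le_of_lt (hulow n)) (fun n => hmemle _ (hunorm n))
    have : Tendsto (fun n : ℕ => 1 / ((n:ℝ) + 1)) atTop (𝓝 0) :=
      tendsto_one_div_add_atTop_nhds_zero_nat
    simpa using tendsto_const_nhds.sub this
  -- weak limit
  obtain ⟨l, hlnorm, φs, hφs, hweak⟩ := weak_seq_compact u hub
  set w : ℕ → H := fun n => u (φs n) with hwdef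
  have hwb : ∀ n, ‖w n‖ ≤ 1 := fun n => hub _
  have hwweak : ∀ v : H, Tendsto (fun n => ⟪w n, v⟫) atTop (𝓝 ⟪l, v⟫) := hweak
  have hSw : Tendsto (fun n => S (w n)) atTop (𝓝 (S l)) :=
    compact_weak_to_strong S hsym hcpt w l hwb hwweak
  have hβw : Tendsto (fun n => β (w n)) atTop (𝓝 (β l)) := hws w l hwweak
  have h1 : Tendsto (fun n => ⟪S (w n), w n⟫) atTop (𝓝 ⟪S l, l⟫) :=
    inner_tendsto_weak _ _ w l hwb hSw hwweak
  have h2 : Tendsto (fun n => ⟪β (w n), w n⟫) atTop (𝓝 ⟪β l, l⟫) :=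
    inner_tendsto_weak _ _ w l hwb hβw hwweak
  have hFl : Tendsto (fun n => F (w n)) atTop (𝓝 (F l)) := h1.sub h2
  have hFM : Tendsto (fun n => F (w n)) atTop (𝓝 M) :=
    hFlimM.comp hφs.tendsto_atTop
  have hFlM : F l = M := tendsto_nhds_unique hFl hFM
  -- l has norm 1
  have hlne : l ≠ 0 := by
    intro h; rw [h] at hFlM; rw [hF0] at hFlM; linarith
  have hlnorm1 : ‖l‖ = 1 := by
    rcases lt_or_eq_of_le hlnorm with hlt | heq
    · exfalso
      have hlpos : 0 < ‖l‖ := norm_pos_iff.2 hlne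
      set t : ℝ := ‖l‖⁻¹ with ht
      have htpos : 0 < t := by positivity
      have ht1 : 1 < t := by
        rw [ht]; exact (one_lt_inv₀ hlpos).2 hlt
      have hnorm : ‖t • l‖ = 1 := norm_smul_inv_norm hlne
      have hle : F (t • l) ≤ M := hmemle _ hnorm
      rw [hFhom t htpos l, hFlM] at hle
      nlinarith [mul_pos hMpos (sub_pos.2 ht1), sq_nonneg (t - 1)]
    · exact heq
  refine ⟨l, hlnorm1, ?_, ?_, ?_⟩
  · show 0 < F l; rw [hFlM]; exact hMpos
  · intro v hv; show F v ≤ F l; rw [hFlM]; exact hmemle v hv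
  · intro v hv
    show F v / ‖v‖ ^ 2 ≤ F l
    rw [hFlM]
    have hvpos : 0 < ‖v‖ := norm_pos_iff.2 hv
    have hnorm : ‖(‖v‖⁻¹ • v : H)‖ = 1 := norm_smul_inv_norm hv
    have hle : F (‖v‖⁻¹ • v) ≤ M := hmemle _ hnorm
    rw [hFhom _ (by positivity) v] at hle
    have : F v / ‖v‖ ^ 2 = ‖v‖⁻¹ ^ 2 * F v := by
      field_simp
    rw [this]; exact hle
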